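/- Let S = {(0,0),(0,1),(0,2),(0,3),(2,1),(2,2),(3,1),(3,2)}. The mesh patterns q1 = (123, S) and q2 = (132, S) are jointly equidistributed. -/

import Mathlib

/-- The boundary-extended sequence of positions of a candidate occurrence:
`posExt i 0 = 0`, `posExt i a = i (a-1) + 1` (1-based position) for `1 ≤ a ≤ m`,
and `posExt i (m+1) = n + 1`. -/
def posExt {m n : ℕ} (i : Fin m → Fin n) : ℕ → ℕ := fun a =>
  if h : 1 ≤ a ∧ a ≤ m then ((i ⟨a - 1, by omega⟩ : Fin n) : ℕ) + 1
  else if a = 0 then 0 else n + 1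

/-- The boundary-extended increasing rearrangement of the values of a candidate
occurrence: `valExt τ π i 0 = 0`, `valExt τ π i b = π (i (τ⁻¹ (b-1))) + 1`
(the `b`-th smallest value, 1-based) for `1 ≤ b ≤ m`, and `valExt τ π i (m+1) = n + 1`. -/
def valExt {m n : ℕ} (τ : Equiv.Perm (Fin m)) (π : Equiv.Perm (Fin n))
    (i : Fin m → Fin n) : ℕ → ℕ := fun b =>
  if h : 1 ≤ b ∧ b ≤ m then ((π (i (τ.symm ⟨b - 1, by omega⟩)) : Fin n) : ℕ) + 1
  else if b = 0 then 0 else n + 1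

/-- `i : Fin m → Fin n` is an occurrence of the mesh pattern `(τ, R)` in the
permutation `π` of `{1, …, n}` (positions and values are taken 1-based via `+1`). -/
def IsMeshOcc {m n : ℕ} (τ : Equiv.Perm (Fin m)) (R : Set (ℕ × ℕ))
    (π : Equiv.Perm (Fin n)) (i : Fin m → Fin n) : Prop :=
  StrictMono i ∧
  (∀ a b : Fin m, π (i a) < π (i b) ↔ τ a < τ b) ∧
  ∀ a b : ℕ, (a, b) ∈ R →
    ¬ ∃ j : Fin n,
        posExt i a < (j : ℕ) + 1 ∧ (j : ℕ) + 1 < posExt i (a + 1) ∧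
        valExt τ π i b < ((π j : Fin n) : ℕ) + 1 ∧
        ((π j : Fin n) : ℕ) + 1 < valExt τ π i (b + 1)

/-- The number of occurrences of the mesh pattern `(τ, R)` in `π`. -/
noncomputable def occ {m n : ℕ} (τ : Equiv.Perm (Fin m)) (R : Set (ℕ × ℕ))
    (π : Equiv.Perm (Fin n)) : ℕ :=
  Nat.card {i : Fin m → Fin n // IsMeshOcc τ R π i}

/-- Mesh patterns `(τ₁, R₁)` and `(τ₂, R₂)` are jointly equidistributed. -/
def JointlyEquidistributed {m₁ m₂ : ℕ} (τ₁ : Equiv.Perm (Fin m₁)) (R₁ : Set (ℕ × ℕ))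
    (τ₂ : Equiv.Perm (Fin m₂)) (R₂ : Set (ℕ × ℕ)) : Prop :=
  ∀ n k ℓ : ℕ,
    Nat.card {π : Equiv.Perm (Fin n) // occ τ₁ R₁ π = k ∧ occ τ₂ R₂ π = ℓ} =
    Nat.card {π : Equiv.Perm (Fin n) // occ τ₁ R₁ π = ℓ ∧ occ τ₂ R₂ π = k}

/-- The pattern 123 (identity on three letters). -/
def perm123 : Equiv.Perm (Fin 3) := 1

/-- The pattern 132 (0-indexed: `0 ↦ 0`, `1 ↦ 2`, `2 ↦ 1`). -/
def perm132 : Equiv.Perm (Fin 3) := Equiv.swap 1 2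

/-- The pattern 12 (identity on two letters). -/
def perm12 : Equiv.Perm (Fin 2) := 1

/-- The pattern 21. -/
def perm21 : Equiv.Perm (Fin 2) := Equiv.swap 0 1

/-- The unsigned Stirling numbers of the first kind. -/
def stirlingFirst : ℕ → ℕ → ℕ
  | 0, 0 => 1
  | 0, _ + 1 => 0
  | _ + 1, 0 => 0
  | n + 1, k + 1 => n * stirlingFirst n (k + 1) + stirlingFirst n k

set_option maxHeartbeats 1000000

open Equiv Finset

namespace MeshAux

section PartThree


def G1 {M : ℕ} (σ : Perm (Fin M)) (j : Fin M) : Prop := 0 < (j:ℕ) ∧ ∀ i, i < j → σ i < σ j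
def G2 {M : ℕ} (σ : Perm (Fin M)) (j : Fin M) : Prop := ∃! i, i < j ∧ σ j < σ i

instance {M} (σ : Perm (Fin M)) : DecidablePred (G1 σ) := fun j => by unfold G1; infer_instance
instance {M} (σ : Perm (Fin M)) : DecidablePred (G2 σ) := fun j =>
  decidable_of_iff (∃ i, (i < j ∧ σ j < σ i) ∧ ∀ y, (y < j ∧ σ j < σ y) → y = i) Iff.rfl

noncomputable def st1 {M} (σ : Perm (Fin M)) : ℕ := Nat.card {j // G1 σ j}
noncomputable def st2 {M} (σ : Perm (Fin M)) : ℕ := Nat.card {j // G2 σ j}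

lemma natCard_subtype {α} [Fintype α] (P : α → Prop) [DecidablePred P] :
    Nat.card {j // P j} = ∑ j, if P j then 1 else 0 := by
  rw [Nat.card_eq_fintype_card, Fintype.card_subtype, Finset.card_filter]

lemma natCard_fin_succ {M : ℕ} (P : Fin (M+1) → Prop) [DecidablePred P] :
    Nat.card {j // P j} =
      Nat.card {j : Fin M // P j.castSucc} + (if P (Fin.last M) then 1 else 0) := by
  rw [natCard_subtype, natCard_subtype, Fin.sum_univ_castSucc]

def peelFun {M : ℕ} (pd : Fin (M+1) × Perm (Fin M)) : Perm (Fin (M+1)) :=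
  (finSuccEquiv' (Fin.last M)).trans ((pd.2.optionCongr).trans (finSuccEquiv' pd.1).symm)

lemma peelFun_last {M : ℕ} (pd : Fin (M+1) × Perm (Fin M)) :
    peelFun pd (Fin.last M) = pd.1 := by
  simp [peelFun]

lemma peelFun_castSucc {M : ℕ} (pd : Fin (M+1) × Perm (Fin M)) (i : Fin M) :
    peelFun pd i.castSucc = pd.1.succAbove (pd.2 i) := by
  simp [peelFun, finSuccEquiv'_last_apply_castSucc, finSuccEquiv'_symm_some]

noncomputable def peel (M : ℕ) : Fin (M+1) × Perm (Fin M) ≃ Perm (Fin (M+1)) :=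
  Equiv.ofBijective peelFun (by
    rw [Fintype.bijective_iff_injective_and_card]
    constructor
    · rintro ⟨p, δ⟩ ⟨p', δ'⟩ h
      have hp : p = p' := by
        have := congrArg (fun (e : Perm (Fin (M+1))) => e (Fin.last M)) h
        simpa [peelFun_last] using this
      subst hp
      have hδ : δ = δ' := by
        ext i
        have := congrArg (fun (e : Perm (Fin (M+1))) => e i.castSucc) h
        simp only [peelFun_castSucc] at this
        exact congrArg Fin.val (Fin.succAbove_right_injective this)
      rw [hδ]
    · simp [Fintype.card_perm, Nat.factorial])

lemma peel_apply {M : ℕ} (pd : Fin (M+1) × Perm (Fin M)) : peel M pd = peelFun pd := rfl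

lemma peel_symm_apply {M : ℕ} (pd : Fin (M+1) × Perm (Fin M)) :
    (peel M).symm (peelFun pd) = pd := by
  rw [← peel_apply, Equiv.symm_apply_apply]

lemma G1_peel_castSucc {M : ℕ} (pd : Fin (M+1) × Perm (Fin M)) (j : Fin M) :
    G1 (peelFun pd) j.castSucc ↔ G1 pd.2 j := by
  obtain ⟨p, δ⟩ := pd
  constructor
  · rintro ⟨h0, h⟩
    refine ⟨by simpa using h0, fun i hij => ?_⟩
    have := h i.castSucc (by rwa [Fin.castSucc_lt_castSucc_iff])
    rw [peelFun_castSucc, peelFun_castSucc] at this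
    exact (Fin.succAbove_lt_succAbove_iff).1 this
  · rintro ⟨h0, h⟩
    refine ⟨by simpa using h0, fun i hij => ?_⟩
    have hne : i ≠ Fin.last M := by
      rintro rfl
      simp [Fin.lt_def] at hij
      omega
    obtain ⟨i', rfl⟩ := Fin.exists_castSucc_eq.mpr hne
    rw [peelFun_castSucc, peelFun_castSucc]
    exact (Fin.succAbove_lt_succAbove_iff).2 (h i' (by rwa [Fin.castSucc_lt_castSucc_iff] at hij))

lemma G1_peel_last {M : ℕ} (pd : Fin (M+1) × Perm (Fin M)) :
    G1 (peelFun pd) (Fin.last M) ↔ (pd.1 = Fin.last M ∧ 0 < M) := by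
  obtain ⟨p, δ⟩ := pd
  constructor
  · rintro ⟨h0, h⟩
    have hM : 0 < M := by simpa using h0
    refine ⟨?_, hM⟩
    have := h (δ.symm ⟨M-1, by omega⟩).castSucc (Fin.castSucc_lt_last _)
    rw [peelFun_castSucc, peelFun_last] at this
    simp only [Equiv.apply_symm_apply] at this
    have := (Fin.succAbove_lt_iff_castSucc_lt _ _).1 this
    rw [Fin.lt_def] at this
    simp only [Fin.coe_castSucc, Fin.val_mk] at this
    have hpb := p.isLt
    ext
    simp only [Fin.val_last]
    omega
  · rintro ⟨rfl, hM⟩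
    refine ⟨by simpa using hM, fun i hi => ?_⟩
    obtain ⟨i', rfl⟩ := Fin.exists_castSucc_eq.mpr (Fin.ne_last_of_lt hi)
    rw [peelFun_castSucc, peelFun_last, Fin.succAbove_last]
    exact Fin.castSucc_lt_last _

lemma G2_peel_castSucc {M : ℕ} (pd : Fin (M+1) × Perm (Fin M)) (j : Fin M) :
    G2 (peelFun pd) j.castSucc ↔ G2 pd.2 j := by
  obtain ⟨p, δ⟩ := pd
  constructor
  · rintro ⟨i, ⟨hi1, hi2⟩, huniq⟩
    have hne : i ≠ Fin.last M := by
      rintro rfl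
      simp [Fin.lt_def] at hi1
      omega
    obtain ⟨i', rfl⟩ := Fin.exists_castSucc_eq.mpr hne
    rw [peelFun_castSucc, peelFun_castSucc] at hi2
    refine ⟨i', ⟨by rwa [Fin.castSucc_lt_castSucc_iff] at hi1, (Fin.succAbove_lt_succAbove_iff).1 hi2⟩, ?_⟩
    intro y ⟨hy1, hy2⟩
    have := huniq y.castSucc ⟨by rwa [Fin.castSucc_lt_castSucc_iff], by
      rw [peelFun_castSucc, peelFun_castSucc]
      exact (Fin.succAbove_lt_succAbove_iff).2 hy2⟩
    exact Fin.castSucc_injective _ this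
  · rintro ⟨i, ⟨hi1, hi2⟩, huniq⟩
    refine ⟨i.castSucc, ⟨by rwa [Fin.castSucc_lt_castSucc_iff], by
      rw [peelFun_castSucc, peelFun_castSucc]
      exact (Fin.succAbove_lt_succAbove_iff).2 hi2⟩, ?_⟩
    intro y ⟨hy1, hy2⟩
    have hne : y ≠ Fin.last M := by
      rintro rfl
      simp [Fin.lt_def] at hy1
      omega
    obtain ⟨y', rfl⟩ := Fin.exists_castSucc_eq.mpr hne
    rw [peelFun_castSucc, peelFun_castSucc] at hy2
    exact congrArg Fin.castSucc
      (huniq y' ⟨by rwa [Fin.castSucc_lt_castSucc_iff] at hy1, (Fin.succAbove_lt_succAbove_iff).1 hy2⟩)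

lemma G2_peel_last {M : ℕ} (pd : Fin (M+1) × Perm (Fin M)) :
    G2 (peelFun pd) (Fin.last M) ↔ (pd.1 : ℕ) + 1 = M := by
  obtain ⟨p, δ⟩ := pd
  show G2 (peelFun (p, δ)) (Fin.last M) ↔ (p : ℕ) + 1 = M
  constructor
  · rintro ⟨i, ⟨hi1, hi2⟩, huniq⟩
    have hM : 0 < M := by
      rcases Nat.eq_zero_or_pos M with h | h
      · subst h; exact absurd hi1 (by simp only [Fin.lt_def, Fin.val_last]; omega)
      · exact h
    -- two candidate witnesses: castSucc (δ.symm ⟨M-1⟩) and castSucc (δ.symm ⟨p.val⟩) if p.val < M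
    have hple : (p:ℕ) < M := by
      obtain ⟨i', rfl⟩ := Fin.exists_castSucc_eq.mpr (Fin.ne_last_of_lt hi1)
      rw [peelFun_last, peelFun_castSucc] at hi2
      have := (Fin.lt_succAbove_iff_le_castSucc _ _).1 hi2
      rw [Fin.le_def] at this
      simp at this
      omega
    have key : ∀ v : Fin M, (p:ℕ) ≤ (v:ℕ) → (δ.symm v).castSucc = i := by
      intro v hv
      refine huniq _ ⟨Fin.castSucc_lt_last _, ?_⟩
      rw [peelFun_last, peelFun_castSucc]
      simp only [Equiv.apply_symm_apply]
      rw [Fin.lt_succAbove_iff_le_castSucc, Fin.le_def]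
      simpa using hv
    have h1 := key ⟨M-1, by omega⟩ (by show (p:ℕ) ≤ M-1; omega)
    have h2 := key ⟨p, hple⟩ (by show (p:ℕ) ≤ (p:ℕ); omega)
    have := (Fin.castSucc_injective _) (h1.trans h2.symm)
    have h3 := δ.symm.injective this
    rw [Fin.mk.injEq] at h3
    omega
  · intro hp
    have hM : 0 < M := by omega
    refine ⟨(δ.symm ⟨M-1, by omega⟩).castSucc, ⟨Fin.castSucc_lt_last _, ?_⟩, ?_⟩
    · rw [peelFun_last, peelFun_castSucc]
      simp only [Equiv.apply_symm_apply]
      rw [Fin.lt_succAbove_iff_le_castSucc, Fin.le_def]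
      show (p:ℕ) ≤ _
      simp only [Fin.coe_castSucc, Equiv.apply_symm_apply, Fin.val_mk]
      omega
    · intro y ⟨hy1, hy2⟩
      obtain ⟨y', rfl⟩ := Fin.exists_castSucc_eq.mpr (Fin.ne_last_of_lt hy1)
      rw [peelFun_last, peelFun_castSucc] at hy2
      have := (Fin.lt_succAbove_iff_le_castSucc _ _).1 hy2
      rw [Fin.le_def] at this
      simp only [Fin.coe_castSucc] at this
      have hlt := (δ y').isLt
      have hval : δ y' = ⟨M-1, by omega⟩ := by
        rw [Fin.ext_iff]
        show ((δ y' : Fin M) : ℕ) = M - 1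
        omega
      rw [← hval]
      simp

lemma st1_peel {M : ℕ} (pd : Fin (M+1) × Perm (Fin M)) :
    st1 (peelFun pd) = st1 pd.2 + (if pd.1 = Fin.last M ∧ 0 < M then 1 else 0) := by
  rw [st1, natCard_fin_succ]
  congr 1
  · exact Nat.card_congr (Equiv.subtypeEquivRight (fun j => G1_peel_castSucc pd j))
  · simp only [G1_peel_last]

lemma st2_peel {M : ℕ} (pd : Fin (M+1) × Perm (Fin M)) :
    st2 (peelFun pd) = st2 pd.2 + (if (pd.1 : ℕ) + 1 = M then 1 else 0) := by
  rw [st2, natCard_fin_succ]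
  congr 1
  · exact Nat.card_congr (Equiv.subtypeEquivRight (fun j => G2_peel_castSucc pd j))
  · simp only [G2_peel_last]

def swapTop (M : ℕ) : Perm (Fin (M+1)) := Equiv.swap (Fin.last M) ⟨M-1, by omega⟩

noncomputable def psi : (M : ℕ) → Perm (Fin M) → Perm (Fin M)
  | 0 => id
  | M+1 => fun σ => peelFun (swapTop M (((peel M).symm σ).1), psi M (((peel M).symm σ).2))

lemma psi_succ {M : ℕ} (σ : Perm (Fin (M+1))) :
    psi (M+1) σ = peelFun (swapTop M (((peel M).symm σ).1), psi M (((peel M).symm σ).2)) := rfl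

lemma swapTop_swapTop {M : ℕ} (p : Fin (M+1)) : swapTop M (swapTop M p) = p :=
  Equiv.swap_apply_self _ _ _

lemma psi_involutive : ∀ (M : ℕ) (σ : Perm (Fin M)), psi M (psi M σ) = σ := by
  intro M
  induction M with
  | zero => intro σ; rfl
  | succ M ih =>
    intro σ
    rw [psi_succ, psi_succ, peel_symm_apply]
    simp only
    rw [swapTop_swapTop, ih]
    rw [← peel_apply, Equiv.apply_symm_apply]

lemma swapTop_cond1 {M : ℕ} (p : Fin (M+1)) :
    (swapTop M p = Fin.last M ∧ 0 < M) ↔ (p : ℕ) + 1 = M := by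
  rcases Nat.eq_zero_or_pos M with hM | hM
  · subst hM
    constructor
    · rintro ⟨-, h⟩
      exact absurd h (lt_irrefl 0)
    · intro h
      have := p.isLt
      omega
  · have hne : (Fin.last M) ≠ (⟨M-1, by omega⟩ : Fin (M+1)) := by
      rw [Ne, Fin.ext_iff]
      show ¬ (M = M - 1)
      omega
    constructor
    · rintro ⟨h, -⟩
      by_cases h1 : p = Fin.last M
      · rw [h1] at h
        unfold swapTop at h
        rw [Equiv.swap_apply_left] at h
        exact absurd h.symm hne
      by_cases h2 : p = ⟨M-1, by omega⟩
      · have := congrArg Fin.val h2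
        simp only at this
        omega
      · unfold swapTop at h
        rw [Equiv.swap_apply_of_ne_of_ne h1 h2] at h
        exact absurd h h1
    · intro h
      have h2 : p = ⟨M-1, by omega⟩ := by
        rw [Fin.ext_iff]
        show (p : ℕ) = M - 1
        omega
      rw [h2, swapTop, Equiv.swap_apply_right]
      exact ⟨rfl, hM⟩

lemma swapTop_cond2 {M : ℕ} (p : Fin (M+1)) :
    ((swapTop M p : ℕ) + 1 = M) ↔ (p = Fin.last M ∧ 0 < M) := by
  rcases Nat.eq_zero_or_pos M with hM | hM
  · subst hM
    constructor
    · intro h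
      have := (swapTop 0 p).isLt
      omega
    · rintro ⟨-, h⟩
      exact absurd h (lt_irrefl 0)
  · constructor
    · intro h
      refine ⟨?_, hM⟩
      by_cases h1 : p = Fin.last M
      · exact h1
      by_cases h2 : p = ⟨M-1, by omega⟩
      · rw [h2] at h
        unfold swapTop at h
        rw [Equiv.swap_apply_right, Fin.val_last] at h
        omega
      · unfold swapTop at h
        rw [Equiv.swap_apply_of_ne_of_ne h1 h2] at h
        refine absurd ?_ h2
        rw [Fin.ext_iff]
        show (p : ℕ) = M - 1
        omega
    · rintro ⟨rfl, -⟩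
      rw [swapTop, Equiv.swap_apply_left]
      show M - 1 + 1 = M
      omega

lemma psi_st : ∀ (M : ℕ) (σ : Perm (Fin M)),
    st1 (psi M σ) = st2 σ ∧ st2 (psi M σ) = st1 σ := by
  intro M
  induction M with
  | zero =>
    intro σ
    constructor <;>
    · simp only [st1, st2]
      rw [Nat.card_of_isEmpty, Nat.card_of_isEmpty]
  | succ M ih =>
    intro σ
    have hσ : σ = peelFun ((peel M).symm σ) := by
      rw [← peel_apply, Equiv.apply_symm_apply]
    rw [psi_succ]
    constructor
    · rw [st1_peel]
      conv_rhs => rw [hσ, st2_peel]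
      simp only
      rw [(ih _).1]
      congr 1
      rw [if_congr (swapTop_cond1 _) rfl rfl]
    · rw [st2_peel]
      conv_rhs => rw [hσ, st1_peel]
      simp only
      rw [(ih _).2]
      congr 1
      rw [if_congr (swapTop_cond2 _) rfl rfl]


end PartThree

section PartOne


def Sset : Set (ℕ × ℕ) := {(0, 0), (0, 1), (0, 2), (0, 3), (2, 1), (2, 2), (3, 1), (3, 2)}

variable {N : ℕ}

lemma strictMono_fin3 {α : Type*} [Preorder α] {f : Fin 3 → α}
    (h01 : f 0 < f 1) (h12 : f 1 < f 2) : StrictMono f := by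
  intro a b hab
  fin_cases a <;> fin_cases b <;>
    first
      | exact h01
      | exact h12
      | exact h01.trans h12
      | exact absurd hab (by decide)

lemma lt_iff_fin3 {α : Type*} [Preorder α] {f : Fin 3 → α}
    (h01 : f 0 < f 1) (h12 : f 1 < f 2) : ∀ a b : Fin 3, f a < f b ↔ a < b := by
  intro a b
  constructor
  · intro h
    by_contra hc
    rcases (not_lt.mp hc).lt_or_eq with h' | h'
    · exact absurd ((strictMono_fin3 h01 h12) h') (asymm h)
    · rw [h'] at h; exact lt_irrefl _ h
  · exact fun h => strictMono_fin3 h01 h12 h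

variable (π : Equiv.Perm (Fin (N+1)))

def SOcc1 (i : Fin 3 → Fin (N+1)) : Prop :=
  i 0 = 0 ∧ i 0 < i 1 ∧ i 1 < i 2 ∧ π (i 0) < π (i 1) ∧ π (i 1) < π (i 2) ∧
    ∀ j, i 1 < j → ¬(π (i 0) < π j ∧ π j < π (i 2))

def SOcc2 (i : Fin 3 → Fin (N+1)) : Prop :=
  i 0 = 0 ∧ i 0 < i 1 ∧ i 1 < i 2 ∧ π (i 0) < π (i 2) ∧ π (i 2) < π (i 1) ∧
    ∀ j, i 1 < j → j ≠ i 2 → ¬(π (i 0) < π j ∧ π j < π (i 1))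

lemma mem_Sset (a b : ℕ) : (a, b) ∈ Sset ↔
    (a = 0 ∧ b = 0) ∨ (a = 0 ∧ b = 1) ∨ (a = 0 ∧ b = 2) ∨ (a = 0 ∧ b = 3) ∨
    (a = 2 ∧ b = 1) ∨ (a = 2 ∧ b = 2) ∨ (a = 3 ∧ b = 1) ∨ (a = 3 ∧ b = 2) := by
  simp [Sset, Prod.ext_iff]

section eval
variable (τ : Equiv.Perm (Fin 3)) (i : Fin 3 → Fin (N+1))

lemma posExt_zero : posExt i 0 = 0 := by simp [posExt]
lemma posExt_one : posExt i 1 = (i 0 : ℕ) + 1 := by simp [posExt]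
lemma posExt_two : posExt i 2 = (i 1 : ℕ) + 1 := by simp [posExt]
lemma posExt_three : posExt i 3 = (i 2 : ℕ) + 1 := by simp [posExt]
lemma posExt_four : posExt i 4 = (N+1) + 1 := by simp [posExt]
lemma valExt_zero : valExt τ π i 0 = 0 := by simp [valExt]
lemma valExt_four : valExt τ π i 4 = (N+1) + 1 := by simp [valExt]
lemma valExt1_one : valExt perm123 π i 1 = (π (i 0) : ℕ) + 1 := by simp [valExt, perm123, Equiv.Perm.one_symm]
lemma valExt1_two : valExt perm123 π i 2 = (π (i 1) : ℕ) + 1 := by simp [valExt, perm123, Equiv.Perm.one_symm]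
lemma valExt1_three : valExt perm123 π i 3 = (π (i 2) : ℕ) + 1 := by simp [valExt, perm123, Equiv.Perm.one_symm]
lemma valExt2_one : valExt perm132 π i 1 = (π (i 0) : ℕ) + 1 := by
  simp [valExt, perm132, Equiv.swap_apply_of_ne_of_ne (by decide : (0:Fin 3) ≠ 1) (by decide : (0:Fin 3) ≠ 2)]
lemma valExt2_two : valExt perm132 π i 2 = (π (i 2) : ℕ) + 1 := by simp [valExt, perm132]
lemma valExt2_three : valExt perm132 π i 3 = (π (i 1) : ℕ) + 1 := by simp [valExt, perm132]
end eval

lemma occ1_iff (i : Fin 3 → Fin (N+1)) : IsMeshOcc perm123 Sset π i ↔ SOcc1 π i := by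
  constructor
  · rintro ⟨hsm, hval, hsh⟩
    have h01 : i 0 < i 1 := hsm (by decide)
    have h12 : i 1 < i 2 := hsm (by decide)
    have hv01 : π (i 0) < π (i 1) := (hval 0 1).2 (by decide)
    have hv12 : π (i 1) < π (i 2) := (hval 1 2).2 (by decide)
    have hi0 : i 0 = 0 := by
      by_contra h0
      have hpos : 0 < (i 0 : ℕ) := Nat.pos_of_ne_zero (fun h => h0 (Fin.ext h))
      have hne : ∀ a : Fin 3, (π 0 : ℕ) ≠ (π (i a) : ℕ) := by
        intro a h
        have hia : i a = 0 := (π.injective (Fin.ext h)).symm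
        have hle : (i 0 : ℕ) ≤ (i a : ℕ) := hsm.monotone (Fin.zero_le a)
        rw [hia, Fin.val_zero] at hle
        omega
      have hb0 := hsh 0 0 (by rw [mem_Sset]; tauto)
      have hb1 := hsh 0 1 (by rw [mem_Sset]; tauto)
      have hb2 := hsh 0 2 (by rw [mem_Sset]; tauto)
      have hb3 := hsh 0 3 (by rw [mem_Sset]; tauto)
      rw [not_exists] at hb0 hb1 hb2 hb3
      have hv01' : (π (i 0) : ℕ) < (π (i 1) : ℕ) := hv01
      have hv12' : (π (i 1) : ℕ) < (π (i 2) : ℕ) := hv12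
      have hne0 := hne 0; have hne1 := hne 1; have hne2 := hne 2
      have hisLt := (π (0 : Fin (N+1))).isLt
      rcases Nat.lt_or_ge (π 0 : ℕ) (π (i 0) : ℕ) with hc | hc
      · exact hb0 0 (by
          rw [posExt_zero, posExt_one, valExt_zero, valExt1_one]
          simp only [Fin.val_zero]
          omega)
      · rcases Nat.lt_or_ge (π 0 : ℕ) (π (i 1) : ℕ) with hc2 | hc2
        · exact hb1 0 (by
            rw [posExt_zero, posExt_one, valExt1_one, valExt1_two]
            simp only [Fin.val_zero]
            omega)
        · rcases Nat.lt_or_ge (π 0 : ℕ) (π (i 2) : ℕ) with hc3 | hc3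
          · exact hb2 0 (by
              rw [posExt_zero, posExt_one, valExt1_two, valExt1_three]
              simp only [Fin.val_zero]
              omega)
          · exact hb3 0 (by
              rw [posExt_zero, posExt_one, valExt1_three, valExt_four]
              simp only [Fin.val_zero]
              omega)
    refine ⟨hi0, h01, h12, hv01, hv12, fun j hj hcontra => ?_⟩
    obtain ⟨hxj, hjc⟩ := hcontra
    have hxj' : (π (i 0) : ℕ) < (π j : ℕ) := hxj
    have hjc' : (π j : ℕ) < (π (i 2) : ℕ) := hjc
    have hj' : (i 1 : ℕ) < (j : ℕ) := hj
    rcases lt_trichotomy ((π j : Fin (N+1)) : ℕ) ((π (i 1) : Fin (N+1)) : ℕ) with hm | hm | hm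
    · rcases lt_trichotomy ((j : Fin (N+1)) : ℕ) ((i 2 : Fin (N+1)) : ℕ) with hp | hp | hp
      · exact hsh 2 1 (by rw [mem_Sset]; tauto) ⟨j, by
          rw [posExt_two, posExt_three, valExt1_one, valExt1_two]
          omega⟩
      · rw [(Fin.ext hp : j = i 2)] at hjc'
        omega
      · exact hsh 3 1 (by rw [mem_Sset]; tauto) ⟨j, by
          rw [posExt_three, posExt_four, valExt1_one, valExt1_two]
          have := (j : Fin (N+1)).isLt
          omega⟩
    · exact absurd (π.injective (Fin.ext hm)) (by
        intro h
        rw [h] at hj'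
        omega)
    · rcases lt_trichotomy ((j : Fin (N+1)) : ℕ) ((i 2 : Fin (N+1)) : ℕ) with hp | hp | hp
      · exact hsh 2 2 (by rw [mem_Sset]; tauto) ⟨j, by
          rw [posExt_two, posExt_three, valExt1_two, valExt1_three]
          omega⟩
      · rw [(Fin.ext hp : j = i 2)] at hjc'
        omega
      · exact hsh 3 2 (by rw [mem_Sset]; tauto) ⟨j, by
          rw [posExt_three, posExt_four, valExt1_two, valExt1_three]
          have := (j : Fin (N+1)).isLt
          omega⟩
  · rintro ⟨hi0, h01, h12, hv01, hv12, hlast⟩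
    refine ⟨strictMono_fin3 h01 h12, ?_, ?_⟩
    · intro a b
      have h := lt_iff_fin3 (f := fun c => π (i c)) hv01 hv12 a b
      simpa [perm123] using h
    · intro a b hab
      rw [mem_Sset] at hab
      rintro ⟨j, hj1, hj2, hj3, hj4⟩
      have hi0' : (i 0 : ℕ) = 0 := by rw [hi0]; rfl
      have hv01' : (π (i 0) : ℕ) < (π (i 1) : ℕ) := hv01
      have hv12' : (π (i 1) : ℕ) < (π (i 2) : ℕ) := hv12
      have h12' : (i 1 : ℕ) < (i 2 : ℕ) := h12
      rcases hab with ⟨rfl, rfl⟩ | ⟨rfl, rfl⟩ | ⟨rfl, rfl⟩ | ⟨rfl, rfl⟩ |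
        ⟨rfl, rfl⟩ | ⟨rfl, rfl⟩ | ⟨rfl, rfl⟩ | ⟨rfl, rfl⟩
      · have e2 : posExt i (0+1) = (i 0 : ℕ) + 1 := posExt_one i
        omega
      · have e2 : posExt i (0+1) = (i 0 : ℕ) + 1 := posExt_one i
        omega
      · have e2 : posExt i (0+1) = (i 0 : ℕ) + 1 := posExt_one i
        omega
      · have e2 : posExt i (0+1) = (i 0 : ℕ) + 1 := posExt_one i
        omega
      · have e1 : posExt i 2 = (i 1 : ℕ) + 1 := posExt_two i
        have e3 : valExt perm123 π i 1 = (π (i 0) : ℕ) + 1 := valExt1_one π i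
        have e4 : valExt perm123 π i (1+1) = (π (i 1) : ℕ) + 1 := valExt1_two π i
        exact hlast j (by show (i 1 : ℕ) < (j : ℕ); omega)
          ⟨by show (π (i 0) : ℕ) < (π j : ℕ); omega, by show (π j : ℕ) < (π (i 2) : ℕ); omega⟩
      · have e1 : posExt i 2 = (i 1 : ℕ) + 1 := posExt_two i
        have e3 : valExt perm123 π i 2 = (π (i 1) : ℕ) + 1 := valExt1_two π i
        have e4 : valExt perm123 π i (2+1) = (π (i 2) : ℕ) + 1 := valExt1_three π i
        exact hlast j (by show (i 1 : ℕ) < (j : ℕ); omega)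
          ⟨by show (π (i 0) : ℕ) < (π j : ℕ); omega, by show (π j : ℕ) < (π (i 2) : ℕ); omega⟩
      · have e1 : posExt i 3 = (i 2 : ℕ) + 1 := posExt_three i
        have e3 : valExt perm123 π i 1 = (π (i 0) : ℕ) + 1 := valExt1_one π i
        have e4 : valExt perm123 π i (1+1) = (π (i 1) : ℕ) + 1 := valExt1_two π i
        exact hlast j (by show (i 1 : ℕ) < (j : ℕ); omega)
          ⟨by show (π (i 0) : ℕ) < (π j : ℕ); omega, by show (π j : ℕ) < (π (i 2) : ℕ); omega⟩
      · have e1 : posExt i 3 = (i 2 : ℕ) + 1 := posExt_three i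
        have e3 : valExt perm123 π i 2 = (π (i 1) : ℕ) + 1 := valExt1_two π i
        have e4 : valExt perm123 π i (2+1) = (π (i 2) : ℕ) + 1 := valExt1_three π i
        exact hlast j (by show (i 1 : ℕ) < (j : ℕ); omega)
          ⟨by show (π (i 0) : ℕ) < (π j : ℕ); omega, by show (π j : ℕ) < (π (i 2) : ℕ); omega⟩


lemma perm132_vals : perm132 0 = 0 ∧ perm132 1 = 2 ∧ perm132 2 = 1 := by
  refine ⟨?_, ?_, ?_⟩ <;> decide

lemma occ2_iff (i : Fin 3 → Fin (N+1)) : IsMeshOcc perm132 Sset π i ↔ SOcc2 π i := by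
  constructor
  · rintro ⟨hsm, hval, hsh⟩
    have h01 : i 0 < i 1 := hsm (by decide)
    have h12 : i 1 < i 2 := hsm (by decide)
    have hv02 : π (i 0) < π (i 2) := (hval 0 2).2 (by decide)
    have hv21 : π (i 2) < π (i 1) := (hval 2 1).2 (by decide)
    have hi0 : i 0 = 0 := by
      by_contra h0
      have hpos : 0 < (i 0 : ℕ) := Nat.pos_of_ne_zero (fun h => h0 (Fin.ext h))
      have hne : ∀ a : Fin 3, (π 0 : ℕ) ≠ (π (i a) : ℕ) := by
        intro a h
        have hia : i a = 0 := (π.injective (Fin.ext h)).symm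
        have hle : (i 0 : ℕ) ≤ (i a : ℕ) := hsm.monotone (Fin.zero_le a)
        rw [hia, Fin.val_zero] at hle
        omega
      have hb0 := hsh 0 0 (by rw [mem_Sset]; tauto)
      have hb1 := hsh 0 1 (by rw [mem_Sset]; tauto)
      have hb2 := hsh 0 2 (by rw [mem_Sset]; tauto)
      have hb3 := hsh 0 3 (by rw [mem_Sset]; tauto)
      rw [not_exists] at hb0 hb1 hb2 hb3
      have hv02' : (π (i 0) : ℕ) < (π (i 2) : ℕ) := hv02
      have hv21' : (π (i 2) : ℕ) < (π (i 1) : ℕ) := hv21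
      have hne0 := hne 0; have hne1 := hne 1; have hne2 := hne 2
      have hisLt := (π (0 : Fin (N+1))).isLt
      rcases Nat.lt_or_ge (π 0 : ℕ) (π (i 0) : ℕ) with hc | hc
      · exact hb0 0 (by
          rw [posExt_zero, posExt_one, valExt_zero, valExt2_one]
          simp only [Fin.val_zero]
          omega)
      · rcases Nat.lt_or_ge (π 0 : ℕ) (π (i 2) : ℕ) with hc2 | hc2
        · exact hb1 0 (by
            rw [posExt_zero, posExt_one, valExt2_one, valExt2_two]
            simp only [Fin.val_zero]
            omega)
        · rcases Nat.lt_or_ge (π 0 : ℕ) (π (i 1) : ℕ) with hc3 | hc3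
          · exact hb2 0 (by
              rw [posExt_zero, posExt_one, valExt2_two, valExt2_three]
              simp only [Fin.val_zero]
              omega)
          · exact hb3 0 (by
              rw [posExt_zero, posExt_one, valExt2_three, valExt_four]
              simp only [Fin.val_zero]
              omega)
    refine ⟨hi0, h01, h12, hv02, hv21, fun j hj hne2 hcontra => ?_⟩
    obtain ⟨hxj, hjc⟩ := hcontra
    have hxj' : (π (i 0) : ℕ) < (π j : ℕ) := hxj
    have hjc' : (π j : ℕ) < (π (i 1) : ℕ) := hjc
    have hj' : (i 1 : ℕ) < (j : ℕ) := hj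
    have hne2' : (j : ℕ) ≠ (i 2 : ℕ) := fun h => hne2 (Fin.ext h)
    have hv02' : (π (i 0) : ℕ) < (π (i 2) : ℕ) := hv02
    have hv21' : (π (i 2) : ℕ) < (π (i 1) : ℕ) := hv21
    rcases lt_trichotomy ((π j : Fin (N+1)) : ℕ) ((π (i 2) : Fin (N+1)) : ℕ) with hm | hm | hm
    · rcases Nat.lt_or_ge ((j : Fin (N+1)) : ℕ) ((i 2 : Fin (N+1)) : ℕ) with hp | hp
      · exact hsh 2 1 (by rw [mem_Sset]; tauto) ⟨j, by
          rw [posExt_two, posExt_three, valExt2_one, valExt2_two]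
          omega⟩
      · exact hsh 3 1 (by rw [mem_Sset]; tauto) ⟨j, by
          rw [posExt_three, posExt_four, valExt2_one, valExt2_two]
          have := (j : Fin (N+1)).isLt
          omega⟩
    · exact absurd (π.injective (Fin.ext hm)) hne2
    · rcases Nat.lt_or_ge ((j : Fin (N+1)) : ℕ) ((i 2 : Fin (N+1)) : ℕ) with hp | hp
      · exact hsh 2 2 (by rw [mem_Sset]; tauto) ⟨j, by
          rw [posExt_two, posExt_three, valExt2_two, valExt2_three]
          omega⟩
      · exact hsh 3 2 (by rw [mem_Sset]; tauto) ⟨j, by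
          rw [posExt_three, posExt_four, valExt2_two, valExt2_three]
          have := (j : Fin (N+1)).isLt
          omega⟩
  · rintro ⟨hi0, h01, h12, hv02, hv21, hlast⟩
    obtain ⟨hp0, hp1, hp2⟩ := perm132_vals
    refine ⟨strictMono_fin3 h01 h12, ?_, ?_⟩
    · intro a b
      have k01 : π (i (perm132 0)) < π (i (perm132 1)) := by rw [hp0, hp1]; exact hv02
      have k12 : π (i (perm132 1)) < π (i (perm132 2)) := by rw [hp1, hp2]; exact hv21
      have h := lt_iff_fin3 (f := fun c => π (i (perm132 c))) k01 k12 (perm132 a) (perm132 b)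
      simp only [perm132, Equiv.swap_apply_self] at h
      exact h
    · intro a b hab
      rw [mem_Sset] at hab
      rintro ⟨j, hj1, hj2, hj3, hj4⟩
      have hi0' : (i 0 : ℕ) = 0 := by rw [hi0]; rfl
      have hv02' : (π (i 0) : ℕ) < (π (i 2) : ℕ) := hv02
      have hv21' : (π (i 2) : ℕ) < (π (i 1) : ℕ) := hv21
      have h12' : (i 1 : ℕ) < (i 2 : ℕ) := h12
      rcases hab with ⟨rfl, rfl⟩ | ⟨rfl, rfl⟩ | ⟨rfl, rfl⟩ | ⟨rfl, rfl⟩ |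
        ⟨rfl, rfl⟩ | ⟨rfl, rfl⟩ | ⟨rfl, rfl⟩ | ⟨rfl, rfl⟩
      · have e2 : posExt i (0+1) = (i 0 : ℕ) + 1 := posExt_one i
        omega
      · have e2 : posExt i (0+1) = (i 0 : ℕ) + 1 := posExt_one i
        omega
      · have e2 : posExt i (0+1) = (i 0 : ℕ) + 1 := posExt_one i
        omega
      · have e2 : posExt i (0+1) = (i 0 : ℕ) + 1 := posExt_one i
        omega
      · have e1 : posExt i 2 = (i 1 : ℕ) + 1 := posExt_two i
        have e2 : posExt i (2+1) = (i 2 : ℕ) + 1 := posExt_three i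
        have e3 : valExt perm132 π i 1 = (π (i 0) : ℕ) + 1 := valExt2_one π i
        have e4 : valExt perm132 π i (1+1) = (π (i 2) : ℕ) + 1 := valExt2_two π i
        refine hlast j (by show (i 1 : ℕ) < (j : ℕ); omega) (fun hje => ?_)
          ⟨by show (π (i 0) : ℕ) < (π j : ℕ); omega, by show (π j : ℕ) < (π (i 1) : ℕ); omega⟩
        rw [hje] at hj2
        omega
      · have e1 : posExt i 2 = (i 1 : ℕ) + 1 := posExt_two i
        have e2 : posExt i (2+1) = (i 2 : ℕ) + 1 := posExt_three i
        have e3 : valExt perm132 π i 2 = (π (i 2) : ℕ) + 1 := valExt2_two π i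
        have e4 : valExt perm132 π i (2+1) = (π (i 1) : ℕ) + 1 := valExt2_three π i
        refine hlast j (by show (i 1 : ℕ) < (j : ℕ); omega) (fun hje => ?_)
          ⟨by show (π (i 0) : ℕ) < (π j : ℕ); omega, by show (π j : ℕ) < (π (i 1) : ℕ); omega⟩
        rw [hje] at hj2
        omega
      · have e1 : posExt i 3 = (i 2 : ℕ) + 1 := posExt_three i
        have e3 : valExt perm132 π i 1 = (π (i 0) : ℕ) + 1 := valExt2_one π i
        have e4 : valExt perm132 π i (1+1) = (π (i 2) : ℕ) + 1 := valExt2_two π i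
        refine hlast j (by show (i 1 : ℕ) < (j : ℕ); omega) (fun hje => ?_)
          ⟨by show (π (i 0) : ℕ) < (π j : ℕ); omega, by show (π j : ℕ) < (π (i 1) : ℕ); omega⟩
        rw [hje] at hj1
        omega
      · have e1 : posExt i 3 = (i 2 : ℕ) + 1 := posExt_three i
        have e3 : valExt perm132 π i 2 = (π (i 2) : ℕ) + 1 := valExt2_two π i
        have e4 : valExt perm132 π i (2+1) = (π (i 1) : ℕ) + 1 := valExt2_three π i
        refine hlast j (by show (i 1 : ℕ) < (j : ℕ); omega) (fun hje => ?_)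
          ⟨by show (π (i 0) : ℕ) < (π j : ℕ); omega, by show (π j : ℕ) < (π (i 1) : ℕ); omega⟩
        rw [hje] at hj1
        omega


def P1 (c : Fin (N+1)) : Prop :=
  (∃ b, π 0 < b ∧ b < c) ∧ ∀ v, π 0 < v → v < c → π.symm v < π.symm c

def P2 (c : Fin (N+1)) : Prop :=
  π 0 < c ∧ ∃! v, π 0 < v ∧ v < c ∧ π.symm c < π.symm v

def Tset (c : Fin (N+1)) : Finset (Fin (N+1)) :=
  Finset.univ.filter (fun j => π 0 < π j ∧ π j < c)

lemma mem_Tset {c j : Fin (N+1)} : j ∈ Tset π c ↔ π 0 < π j ∧ π j < c := by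
  simp [Tset]

lemma Tset_nonempty {c : Fin (N+1)} (hc : ∃ b, π 0 < b ∧ b < c) : (Tset π c).Nonempty := by
  obtain ⟨b, hb1, hb2⟩ := hc
  exact ⟨π.symm b, by rw [mem_Tset, Equiv.apply_symm_apply]; exact ⟨hb1, hb2⟩⟩

lemma P1_of_socc1 {i : Fin 3 → Fin (N+1)} (h : SOcc1 π i) : P1 π (π (i 2)) := by
  obtain ⟨hi0, h01, h12, hv01, hv12, hlast⟩ := h
  rw [hi0] at hv01
  constructor
  · exact ⟨π (i 1), hv01, hv12⟩
  · intro v hv1 hv2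
    rw [Equiv.symm_apply_apply]
    by_contra hcon
    push_neg at hcon
    refine hlast (π.symm v) (lt_of_lt_of_le h12 hcon) ⟨?_, ?_⟩
    · rw [hi0, Equiv.apply_symm_apply]; exact hv1
    · rw [Equiv.apply_symm_apply]; exact hv2

lemma P2_of_socc2 {i : Fin 3 → Fin (N+1)} (h : SOcc2 π i) : P2 π (π (i 1)) := by
  obtain ⟨hi0, h01, h12, hv02, hv21, hlast⟩ := h
  have hv02' : π 0 < π (i 2) := by rw [← hi0]; exact hv02
  refine ⟨hv02'.trans hv21, π (i 2), ⟨hv02', hv21, ?_⟩, ?_⟩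
  · rw [Equiv.symm_apply_apply, Equiv.symm_apply_apply]
    exact h12
  · intro y ⟨hy1, hy2, hy3⟩
    rw [Equiv.symm_apply_apply] at hy3
    by_cases hcase : π.symm y = i 2
    · rw [← hcase, Equiv.apply_symm_apply]
    · exfalso
      refine hlast (π.symm y) hy3 hcase ⟨?_, ?_⟩
      · rw [hi0, Equiv.apply_symm_apply]; exact hy1
      · rw [Equiv.apply_symm_apply]; exact hy2

noncomputable def E1 : {i : Fin 3 → Fin (N+1) // SOcc1 π i} ≃ {c : Fin (N+1) // P1 π c} where
  toFun ic := ⟨π (ic.1 2), P1_of_socc1 π ic.2⟩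
  invFun cc := ⟨fun t => if t = 0 then 0 else if t = 1
        then (Tset π cc.1).max' (Tset_nonempty π cc.2.1) else π.symm cc.1, by
    obtain ⟨c, hc⟩ := cc
    have hmem : (Tset π c).max' (Tset_nonempty π hc.1) ∈ Tset π c := (Tset π c).max'_mem _
    rw [mem_Tset] at hmem
    refine ⟨rfl, ?_, ?_, ?_, ?_, ?_⟩
    · show (0 : Fin (N+1)) < (Tset π c).max' (Tset_nonempty π hc.1)
      rw [Fin.pos_iff_ne_zero]
      intro h0
      rw [h0] at hmem
      exact lt_irrefl _ hmem.1
    · show (Tset π c).max' (Tset_nonempty π hc.1) < π.symm c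
      have := hc.2 (π ((Tset π c).max' (Tset_nonempty π hc.1))) hmem.1 hmem.2
      rwa [Equiv.symm_apply_apply] at this
    · show π 0 < π ((Tset π c).max' (Tset_nonempty π hc.1))
      exact hmem.1
    · show π ((Tset π c).max' (Tset_nonempty π hc.1)) < π (π.symm c)
      rw [Equiv.apply_symm_apply]
      exact hmem.2
    · intro j hj hcontra
      obtain ⟨hc1, hc2⟩ := hcontra
      have hc1' : π 0 < π j := hc1
      have hc2' : π j < c := by
        have : π j < π (π.symm c) := hc2
        rwa [Equiv.apply_symm_apply] at this
      have hjT : j ∈ Tset π c := by rw [mem_Tset]; exact ⟨hc1', hc2'⟩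
      have hle := (Tset π c).le_max' j hjT
      have hj' : (Tset π c).max' (Tset_nonempty π hc.1) < j := hj
      exact absurd hj' (not_lt.mpr hle)⟩
  left_inv := by
    rintro ⟨i, hi⟩
    obtain ⟨hi0, h01, h12, hv01, hv12, hlast⟩ := hi
    apply Subtype.ext
    funext t
    fin_cases t
    · exact hi0.symm
    · have hne2 : (Tset π (π (i 2))).Nonempty := by
        refine Tset_nonempty π ⟨π (i 1), ?_, hv12⟩
        rw [← hi0]; exact hv01
      show (Tset π (π (i 2))).max' hne2 = i 1
      refine le_antisymm (Finset.max'_le _ _ _ ?_) (Finset.le_max' _ _ ?_)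
      · intro y hy
        rw [mem_Tset] at hy
        by_contra hcon
        push_neg at hcon
        exact hlast y hcon ⟨by rw [hi0]; exact hy.1, hy.2⟩
      · rw [mem_Tset, ← hi0]
        exact ⟨hv01, hv12⟩
    · show π.symm (π (i 2)) = i 2
      exact Equiv.symm_apply_apply _ _
  right_inv := by
    rintro ⟨c, hc⟩
    apply Subtype.ext
    show π (π.symm c) = c
    exact Equiv.apply_symm_apply _ _

noncomputable def E2 : {i : Fin 3 → Fin (N+1) // SOcc2 π i} ≃ {c : Fin (N+1) // P2 π c} where
  toFun ic := ⟨π (ic.1 1), P2_of_socc2 π ic.2⟩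
  invFun cc := ⟨fun t => if t = 0 then 0 else if t = 1
        then π.symm cc.1 else π.symm cc.2.2.choose, by
    obtain ⟨c, hc⟩ := cc
    obtain ⟨⟨hv1, hv2, hv3⟩, huniq⟩ := hc.2.choose_spec
    have hxc : π 0 < c := hc.1
    refine ⟨rfl, ?_, ?_, ?_, ?_, ?_⟩
    · show (0 : Fin (N+1)) < π.symm c
      rw [Fin.pos_iff_ne_zero]
      intro h0
      have hc0 : c = π 0 := by rw [← h0, Equiv.apply_symm_apply]
      rw [hc0] at hxc
      exact lt_irrefl _ hxc
    · show π.symm c < π.symm hc.2.choose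
      exact hv3
    · show π 0 < π (π.symm hc.2.choose)
      rw [Equiv.apply_symm_apply]
      exact hv1
    · show π (π.symm hc.2.choose) < π (π.symm c)
      rw [Equiv.apply_symm_apply, Equiv.apply_symm_apply]
      exact hv2
    · intro j hj hne hcontra
      obtain ⟨hc1, hc2⟩ := hcontra
      have hj' : π.symm c < j := hj
      have hne' : j ≠ π.symm hc.2.choose := hne
      have hc1' : π 0 < π j := hc1
      have hc2' : π j < c := by
        have : π j < π (π.symm c) := hc2
        rwa [Equiv.apply_symm_apply] at this
      have heq := huniq (π j) ⟨hc1', hc2', by rwa [Equiv.symm_apply_apply]⟩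
      exact hne' (by rw [← heq, Equiv.symm_apply_apply])⟩
  left_inv := by
    rintro ⟨i, hi⟩
    have hprop := P2_of_socc2 π hi
    obtain ⟨hi0, h01, h12, hv02, hv21, hlast⟩ := hi
    apply Subtype.ext
    funext t
    fin_cases t
    · exact hi0.symm
    · show π.symm (π (i 1)) = i 1
      exact Equiv.symm_apply_apply _ _
    · show π.symm (Exists.choose hprop.2) = i 2
      have hv02' : π 0 < π (i 2) := by rw [← hi0]; exact hv02
      have heq := hprop.2.choose_spec.2 (π (i 2)) ⟨hv02', hv21, by
        rw [Equiv.symm_apply_apply, Equiv.symm_apply_apply]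
        exact h12⟩
      rw [← heq, Equiv.symm_apply_apply]
  right_inv := by
    rintro ⟨c, hc⟩
    apply Subtype.ext
    show π (π.symm c) = c
    exact Equiv.apply_symm_apply _ _


end PartOne

section PartTwo


variable {N : ℕ}


def bigVals (x : Fin (N+1)) : Finset (Fin (N+1)) := Finset.univ.filter (fun v => x < v)

def Mx (x : Fin (N+1)) : ℕ := (bigVals x).card

def bigV (x : Fin (N+1)) : Fin (Mx x) ≃o {v // v ∈ bigVals x} := (bigVals x).orderIsoOfFin rfl

def bigPos (x : Fin (N+1)) (π : Perm (Fin (N+1))) : Finset (Fin (N+1)) :=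
  Finset.univ.filter (fun p => x < π p)

lemma bigPos_card (x : Fin (N+1)) (π : Perm (Fin (N+1))) : (bigPos x π).card = Mx x := by
  rw [Mx, bigVals, bigPos]
  have himg : Finset.image π.symm (Finset.univ.filter (fun v => x < v)) =
      Finset.univ.filter (fun p => x < π p) := by
    ext p
    simp only [Finset.mem_image, Finset.mem_filter, Finset.mem_univ, true_and]
    constructor
    · rintro ⟨v, hv, rfl⟩; rwa [Equiv.apply_symm_apply]
    · intro h; exact ⟨π p, h, Equiv.symm_apply_apply _ _⟩
  rw [← himg, Finset.card_image_of_injective _ π.symm.injective]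

def bigP (x : Fin (N+1)) (π : Perm (Fin (N+1))) : Fin (Mx x) ≃o {p // p ∈ bigPos x π} :=
  (bigPos x π).orderIsoOfFin (bigPos_card x π)

lemma mem_bigVals {x v : Fin (N+1)} : v ∈ bigVals x ↔ x < v := by simp [bigVals]
lemma mem_bigPos {x p : Fin (N+1)} {π : Perm (Fin (N+1))} : p ∈ bigPos x π ↔ x < π p := by
  simp [bigPos]

def cp (x : Fin (N+1)) (π : Perm (Fin (N+1))) : Perm (Fin (Mx x)) :=
  (bigV x).toEquiv.trans ((Equiv.subtypeEquiv π.symm (by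
    intro v
    rw [mem_bigVals, mem_bigPos, Equiv.apply_symm_apply])).trans (bigP x π).toEquiv.symm)

lemma cp_spec (x : Fin (N+1)) (π : Perm (Fin (N+1))) (j : Fin (Mx x)) :
    ((bigP x π (cp x π j)) : Fin (N+1)) = π.symm ((bigV x j : Fin (N+1))) := by
  simp [cp]

lemma bigV_lt_iff (x : Fin (N+1)) (i j : Fin (Mx x)) :
    ((bigV x i : Fin (N+1))) < ((bigV x j : Fin (N+1))) ↔ i < j := by
  rw [Subtype.coe_lt_coe]
  exact (bigV x).lt_iff_lt

lemma bigP_lt_iff (x : Fin (N+1)) (π : Perm (Fin (N+1))) (i j : Fin (Mx x)) :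
    ((bigP x π i : Fin (N+1))) < ((bigP x π j : Fin (N+1))) ↔ i < j := by
  rw [Subtype.coe_lt_coe]
  exact (bigP x π).lt_iff_lt

lemma pos_lt_iff (x : Fin (N+1)) (π : Perm (Fin (N+1))) (i j : Fin (Mx x)) :
    π.symm ((bigV x i : Fin (N+1))) < π.symm ((bigV x j : Fin (N+1))) ↔ cp x π i < cp x π j := by
  rw [← cp_spec, ← cp_spec, bigP_lt_iff]

lemma bigV_surj {x v : Fin (N+1)} (h : x < v) : ∃ i, ((bigV x i : Fin (N+1))) = v :=
  ⟨(bigV x).symm ⟨v, mem_bigVals.2 h⟩, by rw [OrderIso.apply_symm_apply]⟩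

lemma bigV_big (x : Fin (N+1)) (j : Fin (Mx x)) : x < ((bigV x j : Fin (N+1))) :=
  mem_bigVals.1 (bigV x j).2

lemma P1_iff_G1 {x : Fin (N+1)} {π : Perm (Fin (N+1))} (hx : π 0 = x) (j : Fin (Mx x)) :
    P1 π ((bigV x j : Fin (N+1))) ↔ G1 (cp x π) j := by
  constructor
  · rintro ⟨⟨b, hb1, hb2⟩, hall⟩
    rw [hx] at hb1
    obtain ⟨ib, rfl⟩ := bigV_surj hb1
    rw [bigV_lt_iff] at hb2
    refine ⟨by have : (ib : ℕ) < (j : ℕ) := hb2; omega, ?_⟩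
    intro i hij
    rw [← pos_lt_iff]
    exact hall _ (by rw [hx]; exact bigV_big x i) ((bigV_lt_iff x i j).2 hij)
  · rintro ⟨hj0, hmono⟩
    have hMpos : 0 < Mx x := lt_of_le_of_lt (Nat.zero_le _) j.isLt
    constructor
    · refine ⟨(bigV x ⟨0, hMpos⟩ : Fin (N+1)), by rw [hx]; exact bigV_big x _, ?_⟩
      rw [bigV_lt_iff]
      exact hj0
    · intro v hv1 hv2
      rw [hx] at hv1
      obtain ⟨iv, rfl⟩ := bigV_surj hv1
      rw [bigV_lt_iff] at hv2
      rw [pos_lt_iff]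
      exact hmono iv hv2

lemma P2_iff_G2 {x : Fin (N+1)} {π : Perm (Fin (N+1))} (hx : π 0 = x) (j : Fin (Mx x)) :
    P2 π ((bigV x j : Fin (N+1))) ↔ G2 (cp x π) j := by
  constructor
  · rintro ⟨-, v0, ⟨h1, h2, h3⟩, huniq⟩
    rw [hx] at h1
    obtain ⟨i0, rfl⟩ := bigV_surj h1
    rw [bigV_lt_iff] at h2
    rw [pos_lt_iff] at h3
    refine ⟨i0, ⟨h2, h3⟩, ?_⟩
    intro y ⟨hy1, hy2⟩
    have := huniq (bigV x y : Fin (N+1)) ⟨by rw [hx]; exact bigV_big x y,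
      (bigV_lt_iff x y j).2 hy1, (pos_lt_iff x π j y).2 hy2⟩
    exact (bigV x).injective (Subtype.ext this)
  · rintro ⟨i0, ⟨hi1, hi2⟩, huniq⟩
    refine ⟨by rw [hx]; exact bigV_big x j, (bigV x i0 : Fin (N+1)),
      ⟨by rw [hx]; exact bigV_big x i0, (bigV_lt_iff x i0 j).2 hi1, (pos_lt_iff x π j i0).2 hi2⟩, ?_⟩
    intro y ⟨hy1, hy2, hy3⟩
    rw [hx] at hy1
    obtain ⟨iy, rfl⟩ := bigV_surj hy1
    rw [bigV_lt_iff] at hy2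
    rw [pos_lt_iff] at hy3
    exact congrArg _ (congrArg _ (huniq iy ⟨hy2, hy3⟩))



section Theta
variable (x : Fin (N+1)) (π : Perm (Fin (N+1)))

def fP : Fin (Mx x) ≃ {p : Fin (N+1) // x < π p} :=
  (bigP x π).toEquiv.trans (Equiv.subtypeEquivRight (fun p => mem_bigPos))

lemma fP_coe (k : Fin (Mx x)) : ((fP x π k : Fin (N+1))) = ((bigP x π k : Fin (N+1))) := rfl

noncomputable def gam : Perm (Fin (Mx x)) := (psi (Mx x) (cp x π)).symm.trans (cp x π)

noncomputable def rho : Perm (Fin (N+1)) :=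
  Equiv.Perm.extendDomain (gam x π) (fP x π)

noncomputable def Th : Perm (Fin (N+1)) := (rho x π).trans π

lemma Th_apply (z : Fin (N+1)) : Th x π z = π (rho x π z) := rfl

lemma rho_apply_not_big {p : Fin (N+1)} (h : ¬ x < π p) : rho x π p = p :=
  Equiv.Perm.extendDomain_apply_not_subtype _ _ h

lemma rho_apply_image (a : Fin (Mx x)) :
    rho x π ((fP x π a : Fin (N+1))) = ((fP x π (gam x π a) : Fin (N+1))) := by
  exact Equiv.Perm.extendDomain_apply_image (gam x π) (fP x π) a

lemma Th_zero (hx : π 0 = x) : Th x π 0 = x := by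
  rw [Th_apply, rho_apply_not_big x π (by rw [hx]; exact lt_irrefl x), hx]

lemma Th_big_iff (p : Fin (N+1)) : x < Th x π p ↔ x < π p := by
  by_cases h : x < π p
  · refine iff_of_true ?_ h
    obtain ⟨a, ha⟩ : ∃ a, ((fP x π a : Fin (N+1))) = p :=
      ⟨(fP x π).symm ⟨p, h⟩, by rw [Equiv.apply_symm_apply]⟩
    rw [← ha, Th_apply, rho_apply_image]
    exact (fP x π (gam x π a)).2
  · refine iff_of_false ?_ h
    rw [Th_apply, rho_apply_not_big x π h]
    exact h

lemma bigPos_Th : bigPos x (Th x π) = bigPos x π := by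
  ext p
  rw [mem_bigPos, mem_bigPos, Th_big_iff]

lemma orderIsoOfFin_congr {α : Type*} [LinearOrder α] {s t : Finset α} {k : ℕ}
    (h : s = t) (hs : s.card = k) (ht : t.card = k) (i : Fin k) :
    ((s.orderIsoOfFin hs i : α)) = ((t.orderIsoOfFin ht i : α)) := by
  subst h; rfl

lemma bigP_Th_coe (k : Fin (Mx x)) :
    ((bigP x (Th x π) k : Fin (N+1))) = ((bigP x π k : Fin (N+1))) :=
  orderIsoOfFin_congr (bigPos_Th x π) _ _ k

lemma Th_symm_apply (v : Fin (N+1)) : (Th x π).symm v = (rho x π).symm (π.symm v) := rfl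

lemma rho_symm_image (b : Fin (Mx x)) :
    (rho x π).symm ((fP x π b : Fin (N+1))) = ((fP x π ((gam x π).symm b) : Fin (N+1))) := by
  have := rho_apply_image x π ((gam x π).symm b)
  rw [Equiv.apply_symm_apply] at this
  rw [← this, Equiv.symm_apply_apply]

lemma cp_Th : cp x (Th x π) = psi (Mx x) (cp x π) := by
  apply Equiv.ext
  intro j
  have h1 : ((bigP x (Th x π) (cp x (Th x π) j) : Fin (N+1))) =
      (Th x π).symm ((bigV x j : Fin (N+1))) := cp_spec x (Th x π) j
  have h2 : (Th x π).symm ((bigV x j : Fin (N+1))) =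
      ((bigP x π (psi (Mx x) (cp x π) j) : Fin (N+1))) := by
    rw [Th_symm_apply, ← cp_spec x π j, ← fP_coe, rho_symm_image, fP_coe]
    have hg : (gam x π).symm (cp x π j) = psi (Mx x) (cp x π) j := by
      simp [gam]
    rw [hg]
  have h3 : ((bigP x (Th x π) (cp x (Th x π) j) : Fin (N+1))) =
      ((bigP x (Th x π) (psi (Mx x) (cp x π) j) : Fin (N+1))) := by
    rw [h1, h2, bigP_Th_coe]
  exact (bigP x (Th x π)).injective (Subtype.ext h3)


lemma fP_Th_coe (k : Fin (Mx x)) :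
    ((fP x (Th x π) k : Fin (N+1))) = ((fP x π k : Fin (N+1))) := by
  rw [fP_coe, fP_coe, bigP_Th_coe]

lemma gam_Th : gam x (Th x π) = (gam x π).symm := by
  rw [gam, gam, cp_Th, psi_involutive]
  ext z
  simp [gam]

lemma rho_Th : rho x (Th x π) = (rho x π).symm := by
  apply Equiv.ext
  intro z
  by_cases h : x < π z
  · obtain ⟨a, ha⟩ : ∃ a, ((fP x π a : Fin (N+1))) = z :=
      ⟨(fP x π).symm ⟨z, h⟩, by rw [Equiv.apply_symm_apply]⟩
    have h' : x < Th x π z := (Th_big_iff x π z).2 h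
    have hsymm : (fP x (Th x π)).symm ⟨z, h'⟩ = a := by
      apply (fP x (Th x π)).injective
      rw [Equiv.apply_symm_apply]
      apply Subtype.ext
      rw [fP_Th_coe]
      exact ha.symm ▸ rfl
    have h1 : rho x (Th x π) z = ((fP x (Th x π) (gam x (Th x π) a) : Fin (N+1))) := by
      rw [rho, Equiv.Perm.extendDomain_apply_subtype (gam x (Th x π)) (fP x (Th x π)) h', hsymm]
    rw [h1, fP_Th_coe, gam_Th]
    rw [← ha, rho_symm_image]
  · have h' : ¬ x < Th x π z := fun hc => h ((Th_big_iff x π z).1 hc)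
    rw [rho, Equiv.Perm.extendDomain_apply_not_subtype (gam x (Th x π)) (fP x (Th x π)) h']
    have : rho x π z = z := rho_apply_not_big x π h
    rw [← this, Equiv.symm_apply_apply, this]

lemma Th_Th : Th x (Th x π) = π := by
  rw [Th, rho_Th]
  apply Equiv.ext
  intro z
  simp [Th]

end Theta


end PartTwo

section Glue
variable {N : ℕ} (x : Fin (N+1)) (π : Equiv.Perm (Fin (N+1)))

lemma P1_mem (hx : π 0 = x) {c : Fin (N+1)} (hc : P1 π c) : c ∈ bigVals x := by
  obtain ⟨⟨b, hb1, hb2⟩, -⟩ := hc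
  rw [mem_bigVals, ← hx]
  exact hb1.trans hb2

lemma P2_mem (hx : π 0 = x) {c : Fin (N+1)} (hc : P2 π c) : c ∈ bigVals x := by
  rw [mem_bigVals, ← hx]
  exact hc.1

noncomputable def EG1 (hx : π 0 = x) :
    {j : Fin (Mx x) // G1 (cp x π) j} ≃ {c : Fin (N+1) // P1 π c} :=
  (Equiv.subtypeEquiv (bigV x).toEquiv (fun j => (P1_iff_G1 hx j).symm)).trans
    (Equiv.subtypeSubtypeEquivSubtype (fun {c} hc => P1_mem x π hx hc))

noncomputable def EG2 (hx : π 0 = x) :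
    {j : Fin (Mx x) // G2 (cp x π) j} ≃ {c : Fin (N+1) // P2 π c} :=
  (Equiv.subtypeEquiv (bigV x).toEquiv (fun j => (P2_iff_G2 hx j).symm)).trans
    (Equiv.subtypeSubtypeEquivSubtype (fun {c} hc => P2_mem x π hx hc))

lemma occ1_eq (hx : π 0 = x) : occ perm123 Sset π = st1 (cp x π) := by
  rw [occ, st1]
  exact Nat.card_congr
    (((Equiv.subtypeEquivRight (fun i => occ1_iff π i)).trans (E1 π)).trans (EG1 x π hx).symm)

lemma occ2_eq (hx : π 0 = x) : occ perm132 Sset π = st2 (cp x π) := by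
  rw [occ, st2]
  exact Nat.card_congr
    (((Equiv.subtypeEquivRight (fun i => occ2_iff π i)).trans (E2 π)).trans (EG2 x π hx).symm)

lemma occ1_Th (hx : π 0 = x) : occ perm123 Sset (Th x π) = occ perm132 Sset π := by
  rw [occ1_eq x (Th x π) (Th_zero x π hx), cp_Th, (psi_st (Mx x) (cp x π)).1]
  exact (occ2_eq x π hx).symm

lemma occ2_Th (hx : π 0 = x) : occ perm132 Sset (Th x π) = occ perm123 Sset π := by
  rw [occ2_eq x (Th x π) (Th_zero x π hx), cp_Th, (psi_st (Mx x) (cp x π)).2]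
  exact (occ1_eq x π hx).symm

end Glue

noncomputable def ThetaG {N : ℕ} (π : Equiv.Perm (Fin (N+1))) : Equiv.Perm (Fin (N+1)) :=
  Th (π 0) π

lemma ThetaG_invol {N : ℕ} (π : Equiv.Perm (Fin (N+1))) : ThetaG (ThetaG π) = π := by
  rw [ThetaG, ThetaG, Th_zero (π 0) π rfl]
  exact Th_Th (π 0) π

lemma occ1_ThetaG {N : ℕ} (π : Equiv.Perm (Fin (N+1))) :
    occ perm123 Sset (ThetaG π) = occ perm132 Sset π :=
  occ1_Th (π 0) π rfl

lemma occ2_ThetaG {N : ℕ} (π : Equiv.Perm (Fin (N+1))) :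
    occ perm132 Sset (ThetaG π) = occ perm123 Sset π :=
  occ2_Th (π 0) π rfl

end MeshAux

theorem statement_2 :
    JointlyEquidistributed perm123 ({(0, 0), (0, 1), (0, 2), (0, 3), (2, 1), (2, 2), (3, 1), (3, 2)} : Set (ℕ × ℕ))
      perm132 ({(0, 0), (0, 1), (0, 2), (0, 3), (2, 1), (2, 2), (3, 1), (3, 2)} : Set (ℕ × ℕ)) := by
  show JointlyEquidistributed perm123 MeshAux.Sset perm132 MeshAux.Sset
  intro n k ℓ
  match n with
  | 0 =>
    have hempty : IsEmpty (Fin 3 → Fin 0) := ⟨fun f => (f 0).elim0⟩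
    have h : ∀ π : Equiv.Perm (Fin 0), occ perm123 MeshAux.Sset π = occ perm132 MeshAux.Sset π := by
      intro π
      rw [occ, occ,
        @Nat.card_of_isEmpty _ ⟨fun s => hempty.false s.1⟩,
        @Nat.card_of_isEmpty _ ⟨fun s => hempty.false s.1⟩]
    apply Nat.card_congr
    apply Equiv.subtypeEquivRight
    intro π
    rw [h π]
    tauto
  | (N+1) =>
    apply Nat.card_congr
    refine ⟨fun pc => ⟨MeshAux.ThetaG pc.1, ?_⟩, fun pc => ⟨MeshAux.ThetaG pc.1, ?_⟩, ?_, ?_⟩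
    · rw [MeshAux.occ1_ThetaG, MeshAux.occ2_ThetaG]
      exact ⟨pc.2.2, pc.2.1⟩
    · rw [MeshAux.occ1_ThetaG, MeshAux.occ2_ThetaG]
      exact ⟨pc.2.2, pc.2.1⟩
    · intro pc
      exact Subtype.ext (MeshAux.ThetaG_invol pc.1)
    · intro pc
      exact Subtype.ext (MeshAux.ThetaG_invol pc.1)
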